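/- arXiv:1904.12567 — 4 statements merged into one kernel-verified Lean document; each statement's English description precedes it below -/
import Mathlib

section
/- The inclusion map ι_X : X → X_Γ is an isometric embedding. -/
open scoped ENNReal
open MeasureTheory Set

noncomputable section

/-- Points of the disjoint union `X ⊔ (S × [0,l])` used to build the glued space `X_Γ`,
where `S` is the circle of circumference `l` (with its quotient / arc metric). -/
abbrev GluePts (X : Type*) (l : ℝ) := X ⊕ (AddCircle l × Set.Icc (0:ℝ) l)

/-- The Euclidean product distance on the cylinder `S × [0,l]`. -/
def cylDist {l : ℝ} (a b : AddCircle l × Set.Icc (0:ℝ) l) : ℝ :=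
  Real.sqrt (dist a.1 b.1 ^ 2 + dist a.2 b.2 ^ 2)

/-- Same, `ℝ≥0∞`-valued. -/
def eCylDist {l : ℝ} (a b : AddCircle l × Set.Icc (0:ℝ) l) : ℝ≥0∞ :=
  ENNReal.ofReal (cylDist a b)

open Classical in
/-- Cost of a single step of a chain in the disjoint union: within one of the two pieces
one pays its distance; jumping between the pieces is free exactly at identified pairs
`γ(p) ∼ (p,0)` and costs `∞` otherwise. -/
def glueStep {X : Type*} [MetricSpace X] {l : ℝ} (γ : AddCircle l → X) :
    GluePts X l → GluePts X l → ℝ≥0∞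
  | Sum.inl x, Sum.inl y => edist x y
  | Sum.inr a, Sum.inr b => eCylDist a b
  | Sum.inl x, Sum.inr b => if x = γ b.1 ∧ (b.2 : ℝ) = 0 then 0 else ∞
  | Sum.inr a, Sum.inl y => if y = γ a.1 ∧ (a.2 : ℝ) = 0 then 0 else ∞

/-- Total cost of a chain (a list of points of the disjoint union). -/
def chainCost {X : Type*} [MetricSpace X] {l : ℝ} (γ : AddCircle l → X) :
    List (GluePts X l) → ℝ≥0∞
  | [] => 0
  | [_] => 0
  | a :: b :: t => glueStep γ a b + chainCost γ (b :: t)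

/-- The quotient (pseudo-)distance of the metric gluing `X_Γ = (X ⊔ S×[0,l]) / (γ(p) ∼ (p,0))`:
the infimum of total costs of finite chains joining the two points. -/
def quotDist {X : Type*} [MetricSpace X] {l : ℝ} (γ : AddCircle l → X)
    (x y : GluePts X l) : ℝ≥0∞ :=
  ⨅ (c : List (GluePts X l)) (_ : c.head? = some x ∧ c.getLast? = some y), chainCost γ c

/-- `γ : S → X` (with `S` the circle of circumference `l`) is a unit speed curve:
the length of the restriction of (the periodic lift of) `γ` to any interval `[a,b]`
equals `b - a`. This expresses that `γ` is the constant speed parametrization of a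
closed rectifiable curve of length `l`. -/
def IsUnitSpeed {X : Type*} [MetricSpace X] {l : ℝ} (γ : AddCircle l → X) : Prop :=
  ∀ a b : ℝ, a ≤ b → eVariationOn (fun t : ℝ => γ t) (Set.Icc a b) = ENNReal.ofReal (b - a)

/-- The canonical retraction `P_Γ : X_Γ → X`: identity on `X` and `(p,t) ↦ γ(p)` on the collar. -/
def glueProj {X : Type*} [MetricSpace X] {l : ℝ} (γ : AddCircle l → X) :
    GluePts X l → X
  | Sum.inl x => x
  | Sum.inr a => γ a.1

end

lemma glueStep_proj_le {X : Type*} [MetricSpace X] {l : ℝ} (γ : AddCircle l → X)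
    (hγLip : LipschitzWith 1 γ) (a b : GluePts X l) :
    edist (glueProj γ a) (glueProj γ b) ≤ glueStep γ a b := by
  classical
  cases a with
  | inl x =>
    cases b with
    | inl y => simp [glueProj, glueStep]
    | inr q =>
      simp only [glueProj, glueStep]
      split
      · next h => simp [h.1]
      · simp
  | inr p =>
    cases b with
    | inl y =>
      simp only [glueProj, glueStep]
      split
      · next h => simp [h.1, edist_comm]
      · simp
    | inr q =>
      simp only [glueProj, glueStep]
      calc edist (γ p.1) (γ q.1) ≤ 1 * edist p.1 q.1 := hγLip p.1 q.1
        _ = ENNReal.ofReal (dist p.1 q.1) := by rw [one_mul, edist_dist]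
        _ ≤ eCylDist p q := by
            apply ENNReal.ofReal_le_ofReal
            unfold cylDist
            rw [Real.le_sqrt dist_nonneg]
            · nlinarith [sq_nonneg (dist p.2 q.2), sq_nonneg (dist p.1 q.1)]
            · positivity

lemma chainCost_lb {X : Type*} [MetricSpace X] {l : ℝ} (γ : AddCircle l → X)
    (hγLip : LipschitzWith 1 γ) :
    ∀ (c : List (GluePts X l)) (x y : GluePts X l),
      c.head? = some x → c.getLast? = some y →
      edist (glueProj γ x) (glueProj γ y) ≤ chainCost γ c
  | [], x, y, hx, hy => by simp at hx
  | [a], x, y, hx, hy => by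
      simp at hx hy; subst hx; subst hy; simp [chainCost]
  | a :: b :: t, x, y, hx, hy => by
      simp only [List.head?] at hx
      injection hx with hx; subst hx
      have hlast : (b :: t).getLast? = some y := by
        rwa [List.getLast?_cons_cons] at hy
      have ih := chainCost_lb γ hγLip (b :: t) b y rfl hlast
      calc edist (glueProj γ a) (glueProj γ y)
          ≤ edist (glueProj γ a) (glueProj γ b) + edist (glueProj γ b) (glueProj γ y) :=
            edist_triangle _ _ _
        _ ≤ glueStep γ a b + chainCost γ (b :: t) :=
            add_le_add (glueStep_proj_le γ hγLip a b) ih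
        _ = chainCost γ (a :: b :: t) := rfl

/-- The inclusion map `ι_X : X → X_Γ` is an isometric embedding:
the quotient distance of the gluing between two points of `X` equals their
original distance in `X`. -/
theorem inclusion_isometric_embedding
    (X : Type*) [MetricSpace X] [CompleteSpace X] (l : ℝ) (hl : 0 < l)
    (γ : AddCircle l → X) (hγLip : LipschitzWith 1 γ) (hγspeed : IsUnitSpeed γ) :
    ∀ x y : X, quotDist γ (Sum.inl x) (Sum.inl y) = edist x y := by
  intro x y
  apply le_antisymm
  · have h := iInf₂_le (f := fun (c : List (GluePts X l))
        (_ : c.head? = some (Sum.inl x) ∧ c.getLast? = some (Sum.inl y)) => chainCost γ c)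
      [Sum.inl x, Sum.inl y] ⟨rfl, rfl⟩
    calc quotDist γ (Sum.inl x) (Sum.inl y)
        ≤ chainCost γ [Sum.inl x, Sum.inl y] := h
      _ = edist x y := by simp [chainCost, glueStep]
  · refine le_iInf₂ fun c hc => ?_
    have := chainCost_lb γ hγLip c _ _ hc.1 hc.2
    simpa [glueProj] using this
end

section
/- The inclusion map ι : S × [0,l] → X_Γ is 1-Lipschitz, and its restriction to S × (0,l] is a local isometry. -/
open scoped ENNReal
open MeasureTheory Set

noncomputable section AuxProof

/-- Embed the cylinder into the `L²` product `AddCircle l × ℝ`. -/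
def toL2 {l : ℝ} (a : AddCircle l × Set.Icc (0:ℝ) l) : WithLp 2 (AddCircle l × ℝ) :=
  (WithLp.equiv 2 _).symm (a.1, (a.2 : ℝ))

lemma cylDist_eq_dist {l : ℝ} (a b : AddCircle l × Set.Icc (0:ℝ) l) :
    cylDist a b = dist (toL2 a) (toL2 b) := by
  rw [cylDist, WithLp.prod_dist_eq_add (by norm_num : (0:ℝ) < (2:ℝ≥0∞).toReal)]
  simp only [toL2]
  rw [show ((2:ℝ≥0∞).toReal) = (2:ℝ) by norm_num]
  rw [← Real.rpow_natCast (dist _ _) 2, ← Real.rpow_natCast (dist _ _) 2,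
    Real.sqrt_eq_rpow, Subtype.dist_eq]
  norm_num

lemma cylDist_nonneg {l : ℝ} (a b : AddCircle l × Set.Icc (0:ℝ) l) :
    0 ≤ cylDist a b := Real.sqrt_nonneg _

lemma cylDist_self {l : ℝ} (a : AddCircle l × Set.Icc (0:ℝ) l) :
    cylDist a a = 0 := by simp [cylDist]

lemma cylDist_comm {l : ℝ} (a b : AddCircle l × Set.Icc (0:ℝ) l) :
    cylDist a b = cylDist b a := by
  simp [cylDist, dist_comm]

lemma cylDist_triangle {l : ℝ} (a b c : AddCircle l × Set.Icc (0:ℝ) l) :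
    cylDist a c ≤ cylDist a b + cylDist b c := by
  rw [cylDist_eq_dist, cylDist_eq_dist, cylDist_eq_dist]
  exact dist_triangle _ _ _

lemma snd_dist_le_cylDist {l : ℝ} (a b : AddCircle l × Set.Icc (0:ℝ) l) :
    dist (a.2 : ℝ) (b.2 : ℝ) ≤ cylDist a b := by
  have : dist (a.2 : ℝ) (b.2 : ℝ) = Real.sqrt (dist a.2 b.2 ^ 2) := by
    rw [Real.sqrt_sq dist_nonneg, Subtype.dist_eq]
  rw [this]
  apply Real.sqrt_le_sqrt
  have : (0:ℝ) ≤ dist a.1 b.1 ^ 2 := sq_nonneg _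
  linarith

lemma eCylDist_self {l : ℝ} (a : AddCircle l × Set.Icc (0:ℝ) l) :
    eCylDist a a = 0 := by simp [eCylDist, cylDist_self]

lemma eCylDist_triangle {l : ℝ} (a b c : AddCircle l × Set.Icc (0:ℝ) l) :
    eCylDist a c ≤ eCylDist a b + eCylDist b c := by
  rw [eCylDist, eCylDist, eCylDist, ← ENNReal.ofReal_add (cylDist_nonneg _ _) (cylDist_nonneg _ _)]
  exact ENNReal.ofReal_le_ofReal (cylDist_triangle a b c)

lemma ofReal_snd_sub_le {l : ℝ} (a b : AddCircle l × Set.Icc (0:ℝ) l) :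
    ENNReal.ofReal ((a.2 : ℝ) - (b.2 : ℝ)) ≤ eCylDist a b := by
  apply ENNReal.ofReal_le_ofReal
  calc (a.2 : ℝ) - (b.2 : ℝ) ≤ |(a.2 : ℝ) - (b.2 : ℝ)| := le_abs_self _
    _ = dist (a.2 : ℝ) (b.2 : ℝ) := (Real.dist_eq _ _).symm
    _ ≤ cylDist a b := snd_dist_le_cylDist a b

/-- The key lower bound for chain costs: a chain ending in the cylinder either pays the
cylinder distance, or (if it visits `X`) it pays the heights of both endpoints. -/
lemma chain_lower {X : Type*} [MetricSpace X] {l : ℝ} (γ : AddCircle l → X)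
    (c : List (GluePts X l)) :
    ∀ (y : AddCircle l × Set.Icc (0:ℝ) l), c.getLast? = some (Sum.inr y) →
      (∀ b, c.head? = some (Sum.inr b) →
        min (eCylDist b y) (ENNReal.ofReal ((b.2:ℝ) + (y.2:ℝ))) ≤ chainCost γ c) ∧
      (∀ x : X, c.head? = some (Sum.inl x) → ENNReal.ofReal ((y.2:ℝ)) ≤ chainCost γ c) := by
  classical
  induction c with
  | nil => intro y hy; simp at hy
  | cons a t IH =>
    intro y hy
    cases t with
    | nil =>
      simp only [List.getLast?_singleton, Option.some.injEq] at hy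
      subst hy
      constructor
      · intro b hb
        simp only [List.head?_cons, Option.some.injEq, Sum.inr.injEq] at hb
        cases hb
        refine le_trans (min_le_left _ _) ?_
        rw [eCylDist_self]
        exact zero_le
      · intro x hx; simp at hx
    | cons z t' =>
      have hlast : (z :: t').getLast? = some (Sum.inr y) := by
        rw [List.getLast?_cons_cons] at hy; exact hy
      have IH' := IH y hlast
      have hcost : chainCost γ (a :: z :: t') = glueStep γ a z + chainCost γ (z :: t') := rfl
      constructor
      · intro b hb
        simp only [List.head?_cons, Option.some.injEq] at hb
        subst hb
        rw [hcost]
        cases z with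
        | inr b' =>
          have h1 := IH'.1 b' (by simp)
          have hstep : glueStep γ (Sum.inr b) (Sum.inr b') = eCylDist b b' := rfl
          rw [hstep]
          rcases le_total (eCylDist b' y) (ENNReal.ofReal ((b'.2:ℝ) + (y.2:ℝ))) with h | h
          · rw [min_eq_left h] at h1
            calc min (eCylDist b y) (ENNReal.ofReal ((b.2:ℝ) + (y.2:ℝ)))
                ≤ eCylDist b y := min_le_left _ _
              _ ≤ eCylDist b b' + eCylDist b' y := eCylDist_triangle b b' y
              _ ≤ eCylDist b b' + chainCost γ (Sum.inr b' :: t') := add_le_add le_rfl h1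
          · rw [min_eq_right h] at h1
            calc min (eCylDist b y) (ENNReal.ofReal ((b.2:ℝ) + (y.2:ℝ)))
                ≤ ENNReal.ofReal ((b.2:ℝ) + (y.2:ℝ)) := min_le_right _ _
              _ ≤ ENNReal.ofReal ((b.2:ℝ) - (b'.2:ℝ)) + ENNReal.ofReal ((b'.2:ℝ) + (y.2:ℝ)) := by
                  have := ENNReal.ofReal_add_le
                    (p := (b.2:ℝ) - (b'.2:ℝ)) (q := (b'.2:ℝ) + (y.2:ℝ))
                  calc ENNReal.ofReal ((b.2:ℝ) + (y.2:ℝ))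
                      = ENNReal.ofReal (((b.2:ℝ) - (b'.2:ℝ)) + ((b'.2:ℝ) + (y.2:ℝ))) := by
                        ring_nf
                    _ ≤ _ := ENNReal.ofReal_add_le
              _ ≤ eCylDist b b' + chainCost γ (Sum.inr b' :: t') :=
                  add_le_add (ofReal_snd_sub_le b b') h1
        | inl x =>
          have hstep : glueStep γ (Sum.inr b) (Sum.inl x) =
              if x = γ b.1 ∧ (b.2 : ℝ) = 0 then 0 else ∞ := rfl
          rw [hstep]
          split_ifs with h
          · have h2 := IH'.2 x (by simp)
            calc min (eCylDist b y) (ENNReal.ofReal ((b.2:ℝ) + (y.2:ℝ)))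
                ≤ ENNReal.ofReal ((b.2:ℝ) + (y.2:ℝ)) := min_le_right _ _
              _ = ENNReal.ofReal ((y.2:ℝ)) := by rw [h.2, zero_add]
              _ ≤ chainCost γ (Sum.inl x :: t') := h2
              _ = 0 + chainCost γ (Sum.inl x :: t') := (zero_add _).symm
          · simp
      · intro x hx
        simp only [List.head?_cons, Option.some.injEq] at hx
        subst hx
        rw [hcost]
        cases z with
        | inl x' =>
          have h2 := IH'.2 x' (by simp)
          exact h2.trans (le_add_self)
        | inr b' =>
          have hstep : glueStep γ (Sum.inl x) (Sum.inr b') =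
              if x = γ b'.1 ∧ (b'.2 : ℝ) = 0 then 0 else ∞ := rfl
          rw [hstep]
          split_ifs with h
          · have h1 := IH'.1 b' (by simp)
            rw [zero_add]
            refine le_trans (le_min ?_ ?_) h1
            · calc ENNReal.ofReal ((y.2:ℝ))
                  = ENNReal.ofReal ((y.2:ℝ) - (b'.2:ℝ)) := by rw [h.2, sub_zero]
                _ ≤ eCylDist y b' := ofReal_snd_sub_le y b'
                _ = eCylDist b' y := by rw [eCylDist, eCylDist, cylDist_comm]
            · exact ENNReal.ofReal_le_ofReal (by rw [h.2]; simp)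
          · simp

end AuxProof

/-- The inclusion map `ι : S × [0,l] → X_Γ` is 1-Lipschitz, and its
restriction to `S × (0,l]` is a local isometry: every point of the open collar has a
neighbourhood on which the quotient distance agrees with the cylinder distance. -/
theorem collar_inclusion_lipschitz_and_local_isometry
    (X : Type*) [MetricSpace X] [CompleteSpace X] (l : ℝ) (hl : 0 < l)
    (γ : AddCircle l → X) (hγLip : LipschitzWith 1 γ) (hγspeed : IsUnitSpeed γ) :
    (∀ a b : AddCircle l × Set.Icc (0:ℝ) l,
        quotDist γ (Sum.inr a) (Sum.inr b) ≤ eCylDist a b) ∧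
    (∀ a : AddCircle l × Set.Icc (0:ℝ) l, 0 < (a.2 : ℝ) →
        ∃ ε > 0, ∀ b c : AddCircle l × Set.Icc (0:ℝ) l,
          cylDist a b < ε → cylDist a c < ε →
            quotDist γ (Sum.inr b) (Sum.inr c) = eCylDist b c) := by
  have upper : ∀ a b : AddCircle l × Set.Icc (0:ℝ) l,
      quotDist γ (Sum.inr a) (Sum.inr b) ≤ eCylDist a b := by
    intro a b
    have h : chainCost γ [Sum.inr a, Sum.inr b] = eCylDist a b := by
      show glueStep γ (Sum.inr a) (Sum.inr b) + chainCost γ [Sum.inr b] = _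
      show eCylDist a b + 0 = _
      rw [add_zero]
    calc quotDist γ (Sum.inr a) (Sum.inr b)
        ≤ chainCost γ [Sum.inr a, Sum.inr b] := by
          refine iInf_le_of_le [Sum.inr a, Sum.inr b] (iInf_le_of_le ?_ le_rfl)
          constructor <;> simp
      _ = eCylDist a b := h
  refine ⟨upper, ?_⟩
  intro a ha
  refine ⟨(a.2 : ℝ) / 3, by linarith, ?_⟩
  set ε : ℝ := (a.2 : ℝ) / 3 with hε
  intro b c hb hc
  refine le_antisymm (upper b c) ?_
  -- lower bound : every chain costs at least `eCylDist b c`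
  have hkey : cylDist b c ≤ (b.2 : ℝ) + (c.2 : ℝ) := by
    have htri : cylDist b c ≤ cylDist a b + cylDist a c := by
      rw [cylDist_comm a b]; exact cylDist_triangle b a c
    have hb2 : (a.2 : ℝ) - ε ≤ (b.2 : ℝ) := by
      have := snd_dist_le_cylDist a b
      have habs : |(a.2 : ℝ) - (b.2 : ℝ)| ≤ cylDist a b := by
        rw [← Real.dist_eq]; exact this
      have := (abs_le.mp habs).2
      linarith
    have hc2 : (a.2 : ℝ) - ε ≤ (c.2 : ℝ) := by
      have := snd_dist_le_cylDist a c
      have habs : |(a.2 : ℝ) - (c.2 : ℝ)| ≤ cylDist a c := by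
        rw [← Real.dist_eq]; exact this
      have := (abs_le.mp habs).2
      linarith
    have : (a.2 : ℝ) = 3 * ε := by rw [hε]; ring
    linarith
  have hmin : eCylDist b c ≤ ENNReal.ofReal ((b.2:ℝ) + (c.2:ℝ)) :=
    ENNReal.ofReal_le_ofReal hkey
  rw [quotDist]
  refine le_iInf fun ch => le_iInf fun hch => ?_
  have := (chain_lower γ ch c hch.2).1 b ?_
  · rw [min_eq_left hmin] at this; exact this
  · exact hch.1
end

section
/- The curve Γ_l in X_Γ corresponding to the top circle S × {l} is a Jordan curve of length l satisfying a 1-chord-arc condition: its constant speed parametrization γ_l satisfies (l/2π)·d_{S¹}(p,q) ≤ d(γ_l(p), γ_l(q)) for all p,q ∈ S¹. -/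
open scoped ENNReal
open MeasureTheory Set

/-- Length of the curve `t ↦ g t`, `t ∈ [a,b]`, with respect to an `ℝ≥0∞`-valued
distance function `d`: the supremum over all partitions of `[a,b]` of the sums of
consecutive distances. -/
noncomputable def curveELength {α : Type*} (d : α → α → ℝ≥0∞) (g : ℝ → α) (a b : ℝ) : ℝ≥0∞ :=
  ⨆ (n : ℕ) (ts : Fin (n + 1) → ℝ)
    (_ : Monotone ts ∧ (∀ i, ts i ∈ Set.Icc a b)),
      ∑ i : Fin n, d (g (ts i.castSucc)) (g (ts i.succ))

noncomputable section AuxProof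

variable {X : Type*} [MetricSpace X] {l : ℝ} (γ : AddCircle l → X)

private lemma quotDist_le_step (x y : GluePts X l) :
    quotDist γ x y ≤ glueStep γ x y := by
  refine le_trans (iInf_le _ [x, y]) (le_trans (iInf_le _ ⟨rfl, rfl⟩) ?_)
  simp [chainCost]

private lemma chainCost_ge (u : GluePts X l → ℝ)
    (hu : ∀ a b, ENNReal.ofReal |u a - u b| ≤ glueStep γ a b) :
    ∀ (c : List (GluePts X l)) (x y : GluePts X l),
      c.head? = some x → c.getLast? = some y →
      ENNReal.ofReal |u x - u y| ≤ chainCost γ c := by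
  intro c
  induction c with
  | nil => intro x y hx hy; simp at hx
  | cons a t ih =>
    intro x y hx hy
    have hax : a = x := by simpa using hx
    subst hax
    match t, ih, hy with
    | [], _, hy =>
      have : a = y := by simpa using hy
      subst this
      simp [chainCost]
    | b :: t, ih, hy =>
      have hy' : (b :: t).getLast? = some y := by
        rw [List.getLast?_cons_cons] at hy; exact hy
      have h2 := ih b y rfl hy'
      have htri : |u a - u y| ≤ |u a - u b| + |u b - u y| := abs_sub_le _ _ _
      calc ENNReal.ofReal |u a - u y|
          ≤ ENNReal.ofReal (|u a - u b| + |u b - u y|) := ENNReal.ofReal_le_ofReal htri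
        _ = ENNReal.ofReal |u a - u b| + ENNReal.ofReal |u b - u y| :=
            ENNReal.ofReal_add (abs_nonneg _) (abs_nonneg _)
        _ ≤ glueStep γ a b + chainCost γ (b :: t) := add_le_add (hu a b) h2
        _ = chainCost γ (a :: b :: t) := rfl

private lemma le_quotDist (u : GluePts X l → ℝ)
    (hu : ∀ a b, ENNReal.ofReal |u a - u b| ≤ glueStep γ a b) (x y : GluePts X l) :
    ENNReal.ofReal |u x - u y| ≤ quotDist γ x y :=
  le_iInf fun c => le_iInf fun hc => chainCost_ge γ u hu c x y hc.1 hc.2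

/-- Test function for the lower bound. -/
private def uFun (q : AddCircle l) : GluePts X l → ℝ
  | Sum.inl _ => 0
  | Sum.inr a => min (a.2 : ℝ) (dist a.1 q)

private lemma cylDist_fst_le (a b : AddCircle l × Set.Icc (0:ℝ) l) :
    dist a.1 b.1 ≤ cylDist a b := by
  calc dist a.1 b.1 = Real.sqrt (dist a.1 b.1 ^ 2) := (Real.sqrt_sq dist_nonneg).symm
    _ ≤ cylDist a b := Real.sqrt_le_sqrt (le_add_of_nonneg_right (sq_nonneg _))

private lemma cylDist_snd_le (a b : AddCircle l × Set.Icc (0:ℝ) l) :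
    dist a.2 b.2 ≤ cylDist a b := by
  calc dist a.2 b.2 = Real.sqrt (dist a.2 b.2 ^ 2) := (Real.sqrt_sq dist_nonneg).symm
    _ ≤ cylDist a b := Real.sqrt_le_sqrt (le_add_of_nonneg_left (sq_nonneg _))

private lemma uFun_lip (q : AddCircle l) (a b : GluePts X l) :
    ENNReal.ofReal |uFun q a - uFun q b| ≤ glueStep γ a b := by
  match a, b with
  | Sum.inl x, Sum.inl y => simp [uFun, glueStep]
  | Sum.inl x, Sum.inr b =>
    by_cases h : x = γ b.1 ∧ (b.2 : ℝ) = 0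
    · have : uFun (X := X) q (Sum.inr b) = 0 := by
        simp [uFun, h.2, min_eq_left dist_nonneg]
      simp [glueStep, h, uFun, this, dist_nonneg]
    · simp [glueStep, h]
  | Sum.inr a, Sum.inl y =>
    by_cases h : y = γ a.1 ∧ (a.2 : ℝ) = 0
    · have : uFun (X := X) q (Sum.inr a) = 0 := by
        simp [uFun, h.2, min_eq_left dist_nonneg]
      simp [glueStep, h, uFun, this, dist_nonneg]
    · simp [glueStep, h]
  | Sum.inr a, Sum.inr b =>
    show ENNReal.ofReal _ ≤ eCylDist a b
    rw [eCylDist]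
    refine ENNReal.ofReal_le_ofReal ?_
    refine le_trans (abs_min_sub_min_le_max _ _ _ _) (max_le ?_ ?_)
    · have : |(a.2 : ℝ) - (b.2 : ℝ)| = dist a.2 b.2 := by
        rw [Subtype.dist_eq, Real.dist_eq]
      rw [this]; exact cylDist_snd_le a b
    · exact le_trans (abs_dist_sub_le _ _ _) (cylDist_fst_le a b)

end AuxProof

private lemma fin_telescope : ∀ {n : ℕ} (ts : Fin (n + 1) → ℝ),
    ∑ i : Fin n, (ts i.succ - ts i.castSucc) = ts (Fin.last n) - ts 0 := by
  intro n
  induction n with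
  | zero => simp
  | succ n ih =>
    intro ts
    rw [Fin.sum_univ_castSucc]
    have h := ih (ts ∘ Fin.castSucc)
    have he : ∀ i : Fin n, ts i.castSucc.succ - ts i.castSucc.castSucc
        = (ts ∘ Fin.castSucc) i.succ - (ts ∘ Fin.castSucc) i.castSucc := by
      intro i
      simp [Function.comp, Fin.succ_castSucc, -Fin.castSucc_succ]
    calc (∑ i : Fin n, (ts (Fin.castSucc i).succ - ts (Fin.castSucc i).castSucc))
          + (ts (Fin.last n).succ - ts (Fin.last n).castSucc)
        = ((ts ∘ Fin.castSucc) (Fin.last n) - (ts ∘ Fin.castSucc) 0)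
          + (ts (Fin.last n).succ - ts (Fin.last n).castSucc) := by
          rw [← h, Finset.sum_congr rfl fun i _ => he i]
      _ = ts (Fin.last (n+1)) - ts 0 := by
          simp [Function.comp, Fin.succ_last]

private lemma addCircle_norm_le (p x : ℝ) : ‖(x : AddCircle p)‖ ≤ |x| := by
  simpa using QuotientAddGroup.norm_mk_le_norm (S := AddSubgroup.zmultiples p) (m := x)

private lemma addCircle_dist_le (p x y : ℝ) :
    dist ((x : ℝ) : AddCircle p) ((y : ℝ) : AddCircle p) ≤ |x - y| := by
  rw [dist_eq_norm, ← AddCircle.coe_sub]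
  exact addCircle_norm_le p (x - y)

private lemma addCircle_dist_eq_of_le {x y : ℝ} (h : |x - y| ≤ Real.pi) :
    dist ((x : ℝ) : AddCircle (2 * Real.pi)) ((y : ℝ) : AddCircle (2 * Real.pi)) = |x - y| := by
  have hπ := Real.pi_pos
  rw [dist_eq_norm, ← AddCircle.coe_sub]
  refine (AddCircle.norm_coe_eq_abs_iff (p := 2 * Real.pi) (by positivity)).2 ?_
  rw [abs_of_pos (by positivity : (0:ℝ) < 2 * Real.pi)]
  linarith

private lemma addCircle_dist_scale (l : ℝ) (hl : 0 < l) (s t : ℝ) :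
    dist (((s * (l / (2 * Real.pi)) : ℝ)) : AddCircle l)
      (((t * (l / (2 * Real.pi)) : ℝ)) : AddCircle l)
      = (l / (2 * Real.pi)) *
        dist ((s : ℝ) : AddCircle (2 * Real.pi)) ((t : ℝ) : AddCircle (2 * Real.pi)) := by
  have hπ := Real.pi_pos
  set c : ℝ := l / (2 * Real.pi) with hc
  have hc0 : 0 < c := div_pos hl (by positivity)
  have hcl : c * (2 * Real.pi) = l := by rw [hc]; exact div_mul_cancel₀ l (by positivity)
  have h1 : ((s * c - t * c : ℝ)) = (c * (s - t) : ℝ) := by ring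
  rw [dist_eq_norm, ← AddCircle.coe_sub, h1, dist_eq_norm, ← AddCircle.coe_sub, ← hcl,
    AddCircle.norm_coe_mul, abs_of_pos hc0]



/-- The curve `Γ_l` in `X_Γ` corresponding to the top circle `S × {l}`
(in its constant speed parametrization `γ_l` over the unit circle `ℝ/2πℤ`) is a Jordan
curve of length `l` satisfying a 1-chord-arc condition:
`(l/2π)·d_{S¹}(p,q) ≤ d(γ_l(p), γ_l(q))` for all `p,q ∈ S¹`. -/
theorem top_curve_jordan_chord_arc
    (X : Type*) [MetricSpace X] [CompleteSpace X] (l : ℝ) (hl : 0 < l)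
    (γ : AddCircle l → X) (hγLip : LipschitzWith 1 γ) (hγspeed : IsUnitSpeed γ)
    (γl : ℝ → GluePts X l)
    (hγl : ∀ θ : ℝ, γl θ =
      Sum.inr (((θ * (l / (2 * Real.pi)) : ℝ) : AddCircle l), ⟨l, ⟨hl.le, le_rfl⟩⟩)) :
    -- `γ_l` is injective on `S¹ = ℝ/2πℤ`, i.e. `Γ_l` is a Jordan curve
    (∀ s t : ℝ, quotDist γ (γl s) (γl t) = 0 →
        (s : AddCircle (2 * Real.pi)) = (t : AddCircle (2 * Real.pi))) ∧
    -- `Γ_l` has length `l`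
    curveELength (quotDist γ) γl 0 (2 * Real.pi) = ENNReal.ofReal l ∧
    -- 1-chord-arc condition for the constant speed parametrization `γ_l`
    (∀ s t : ℝ,
        ENNReal.ofReal ((l / (2 * Real.pi)) *
          dist ((s : AddCircle (2 * Real.pi))) ((t : AddCircle (2 * Real.pi)))) ≤
        quotDist γ (γl s) (γl t)) := by
  have hπ := Real.pi_pos
  set c : ℝ := l / (2 * Real.pi) with hc
  have hc0 : 0 < c := div_pos hl (by positivity)
  have hcl : c * (2 * Real.pi) = l := by rw [hc]; exact div_mul_cancel₀ l (by positivity)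
  -- chord-arc (part 3)
  have h3 : ∀ s t : ℝ,
      ENNReal.ofReal (c * dist ((s : ℝ) : AddCircle (2 * Real.pi))
        ((t : ℝ) : AddCircle (2 * Real.pi))) ≤ quotDist γ (γl s) (γl t) := by
    intro s t
    set q : AddCircle l := ((t * c : ℝ) : AddCircle l) with hq
    set p : AddCircle l := ((s * c : ℝ) : AddCircle l) with hp
    have hdle : dist p q ≤ l := by
      have := AddCircle.norm_le_half_period (p := l) (x := p - q) (by positivity)
      rw [abs_of_pos hl] at this
      rw [dist_eq_norm]; linarith
    have hu1 : uFun (X := X) q (γl s) = dist p q := by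
      rw [hγl s]; simp [uFun, min_eq_right hdle, hl.le, dist_nonneg]; exact min_eq_right hdle
    have hu2 : uFun (X := X) q (γl t) = 0 := by
      rw [hγl t]; simp [uFun, hq, hl.le]
    have key := le_quotDist γ (uFun q) (uFun_lip γ q) (γl s) (γl t)
    rw [hu1, hu2, sub_zero, abs_of_nonneg dist_nonneg] at key
    rwa [← addCircle_dist_scale l hl s t, ← hp, ← hq]
  refine ⟨?_, ?_, h3⟩
  · -- injectivity
    intro s t h0
    have := h3 s t
    rw [h0, nonpos_iff_eq_zero, ENNReal.ofReal_eq_zero] at this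
    have hd0 : dist ((s : ℝ) : AddCircle (2 * Real.pi)) ((t : ℝ) : AddCircle (2 * Real.pi)) = 0 := by
      nlinarith [dist_nonneg (x := ((s : ℝ) : AddCircle (2 * Real.pi)))
        (y := ((t : ℝ) : AddCircle (2 * Real.pi)))]
    exact eq_of_dist_eq_zero hd0
  · -- length
    refine le_antisymm ?_ ?_
    · -- upper bound
      refine iSup_le fun n => iSup_le fun ts => iSup_le fun hts => ?_
      obtain ⟨hmono, hmem⟩ := hts
      have step : ∀ i : Fin n, quotDist γ (γl (ts i.castSucc)) (γl (ts i.succ)) ≤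
          ENNReal.ofReal (c * (ts i.succ - ts i.castSucc)) := by
        intro i
        have hΔ : 0 ≤ ts i.succ - ts i.castSucc :=
          sub_nonneg.2 (hmono (Fin.castSucc_le_succ i))
        refine le_trans (quotDist_le_step γ _ _) ?_
        rw [hγl, hγl]
        show eCylDist _ _ ≤ _
        rw [eCylDist, cylDist]
        refine ENNReal.ofReal_le_ofReal ?_
        have : dist (⟨l, ⟨hl.le, le_rfl⟩⟩ : Set.Icc (0:ℝ) l) ⟨l, ⟨hl.le, le_rfl⟩⟩ = 0 :=
          dist_self _
        rw [this]
        have hs : Real.sqrt (dist ((ts i.castSucc * c : ℝ) : AddCircle l)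
            ((ts i.succ * c : ℝ) : AddCircle l) ^ 2 + 0 ^ 2)
            = dist ((ts i.castSucc * c : ℝ) : AddCircle l) ((ts i.succ * c : ℝ) : AddCircle l) := by
          rw [zero_pow (by norm_num), add_zero, Real.sqrt_sq dist_nonneg]
        rw [hs, addCircle_dist_scale l hl]
        calc c * dist ((ts i.castSucc : ℝ) : AddCircle (2 * Real.pi))
              ((ts i.succ : ℝ) : AddCircle (2 * Real.pi))
            ≤ c * |ts i.castSucc - ts i.succ| := by
              have := addCircle_dist_le (2 * Real.pi) (ts i.castSucc) (ts i.succ)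
              nlinarith
          _ = c * (ts i.succ - ts i.castSucc) := by rw [abs_sub_comm, abs_of_nonneg hΔ]
      calc ∑ i : Fin n, quotDist γ (γl (ts i.castSucc)) (γl (ts i.succ))
          ≤ ∑ i : Fin n, ENNReal.ofReal (c * (ts i.succ - ts i.castSucc)) :=
            Finset.sum_le_sum fun i _ => step i
        _ = ENNReal.ofReal (∑ i : Fin n, c * (ts i.succ - ts i.castSucc)) := by
            exact (ENNReal.ofReal_sum_of_nonneg fun i _ =>
              mul_nonneg hc0.le (sub_nonneg.2 (hmono (Fin.castSucc_le_succ i)))).symm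
        _ ≤ ENNReal.ofReal l := by
            refine ENNReal.ofReal_le_ofReal ?_
            rw [← Finset.mul_sum, fin_telescope ts]
            have h1 : ts (Fin.last n) ≤ 2 * Real.pi := (hmem (Fin.last n)).2
            have h2 : (0 : ℝ) ≤ ts 0 := (hmem 0).1
            nlinarith
    · -- lower bound: partition 0, π/2, π, 3π/2, 2π
      have hkey : ENNReal.ofReal l ≤
          ∑ i : Fin 4, quotDist γ (γl ((i.castSucc.1 : ℝ) * (Real.pi / 2)))
            (γl ((i.succ.1 : ℝ) * (Real.pi / 2))) := by
        have hstep : ∀ i : Fin 4,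
            ENNReal.ofReal (c * (Real.pi / 2)) ≤
              quotDist γ (γl ((i.castSucc.1 : ℝ) * (Real.pi / 2)))
                (γl ((i.succ.1 : ℝ) * (Real.pi / 2))) := by
          intro i
          refine le_trans (le_of_eq ?_) (h3 _ _)
          congr 1
          have hd : dist (((i.castSucc.1 : ℝ) * (Real.pi / 2) : ℝ) : AddCircle (2 * Real.pi))
              (((i.succ.1 : ℝ) * (Real.pi / 2) : ℝ) : AddCircle (2 * Real.pi))
              = Real.pi / 2 := by
            have hv : (i.succ.1 : ℝ) = (i.castSucc.1 : ℝ) + 1 := by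
              rw [Fin.val_succ, Fin.coe_castSucc]; push_cast; ring
            have habs : |(i.castSucc.1 : ℝ) * (Real.pi / 2) -
                (i.succ.1 : ℝ) * (Real.pi / 2)| = Real.pi / 2 := by
              rw [hv]
              have : (i.castSucc.1 : ℝ) * (Real.pi / 2) -
                  ((i.castSucc.1 : ℝ) + 1) * (Real.pi / 2) = -(Real.pi / 2) := by ring
              rw [this, abs_neg, abs_of_pos (by positivity)]
            rw [addCircle_dist_eq_of_le (by rw [habs]; linarith), habs]
          rw [hd]
        calc ENNReal.ofReal l = ∑ _i : Fin 4, ENNReal.ofReal (c * (Real.pi / 2)) := by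
              rw [Finset.sum_const, Finset.card_univ, Fintype.card_fin, nsmul_eq_mul]
              rw [show ((4:ℕ):ℝ≥0∞) = ENNReal.ofReal 4 by simp,
                ← ENNReal.ofReal_mul (by norm_num)]
              congr 1
              have h4 : (4:ℝ) * (c * (Real.pi/2)) = c * (2*Real.pi) := by ring
              rw [h4, hcl]
          _ ≤ _ := Finset.sum_le_sum fun i _ => hstep i
      refine le_trans hkey ?_
      have hmem : ∀ i : Fin 5, ((i.1 : ℝ) * (Real.pi / 2)) ∈ Set.Icc (0:ℝ) (2 * Real.pi) := by
        intro i
        constructor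
        · positivity
        · have : (i.1 : ℝ) ≤ 4 := by
            have := i.2
            have : i.1 ≤ 4 := by omega
            exact_mod_cast this
          nlinarith
      have hmono : Monotone fun i : Fin 5 => ((i.1 : ℝ) * (Real.pi / 2)) := by
        intro i j hij
        have : (i.1 : ℝ) ≤ (j.1 : ℝ) := by exact_mod_cast hij
        nlinarith
      refine le_trans (le_of_eq rfl) ?_
      refine le_iSup_of_le 4 ?_
      refine le_iSup_of_le (fun i : Fin 5 => ((i.1 : ℝ) * (Real.pi / 2))) ?_
      exact le_iSup_of_le ⟨hmono, hmem⟩ (le_refl _)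
end

section
/- If a seminorm σ on ℝ² satisfies the Q-quasi-conformality condition σ(v) ≤ Q·σ(w) for all unit vectors v,w ∈ S¹, then (max_{v ∈ S¹} σ(v))² ≤ Q²·J(σ), and also J(σ) ≤ (max_{v ∈ S¹} σ(v))². (This is the pointwise estimate behind Area(u) ≤ E²₊(u) ≤ Q²·Area(u) for Q-quasi-conformal Sobolev maps.) -/
open scoped ENNReal
open MeasureTheory

noncomputable section

/-- The Euclidean plane. -/
abbrev E2 := EuclideanSpace ℝ (Fin 2)

/-- The Busemann Jacobian of a seminorm `σ` on `ℝ²`: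
`J(σ) = π / L²({v : σ(v) ≤ 1})`, with the convention `J(σ) = 0` when the unit ball of
`σ` has infinite Lebesgue measure. -/
def busemannJ (σ : Seminorm ℝ E2) : ℝ≥0∞ :=
  ENNReal.ofReal Real.pi / volume {v : E2 | σ v ≤ 1}

end

/-- Each coordinate is bounded by the Euclidean norm. -/
lemma E2.abs_coord_le_norm (v : E2) (i : Fin 2) : |v i| ≤ ‖v‖ := by
  rw [EuclideanSpace.norm_eq, ← Real.sqrt_sq_eq_abs]
  apply Real.sqrt_le_sqrt
  calc (v i)^2 = ‖v i‖^2 := by rw [Real.norm_eq_abs, sq_abs]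
  _ ≤ ∑ j, ‖v j‖^2 := Finset.single_le_sum (f := fun j => ‖v j‖^2)
      (fun j _ => by positivity) (Finset.mem_univ i)

/-- Decomposition of a vector of `E2` along the standard basis. -/
lemma E2.decomp (v : E2) :
    v = v 0 • EuclideanSpace.single 0 (1:ℝ) + v 1 • EuclideanSpace.single 1 1 := by
  ext i
  fin_cases i <;> simp

/-- Volume of a closed ball in the euclidean plane. -/
lemma E2.volume_closedBall (r : ℝ) (hr : 0 ≤ r) :
    volume (Metric.closedBall (0 : E2) r) = ENNReal.ofReal (Real.pi * r ^ 2) := by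
  rw [EuclideanSpace.volume_closedBall]
  have h1 : Fintype.card (Fin 2) = 2 := by simp
  rw [h1]
  have h2 : ((2:ℕ):ℝ)/2 + 1 = 2 := by norm_num
  rw [h2, Real.Gamma_two, Real.sq_sqrt Real.pi_pos.le, div_one,
    ← ENNReal.ofReal_pow hr, ← ENNReal.ofReal_mul (by positivity)]
  ring_nf

/-- If a seminorm `σ` on `ℝ²` is `Q`-quasi-conformal, i.e.
`σ(v) ≤ Q·σ(w)` for all unit vectors `v, w`, then with `M = max_{|v|=1} σ(v)` one has
`M² ≤ Q²·J(σ)` and `J(σ) ≤ M²`. This is the pointwise estimate behind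
`Area(u) ≤ E²₊(u) ≤ Q²·Area(u)` for `Q`-quasi-conformal Sobolev maps. -/
theorem quasiconformal_energy_area_estimate
    (σ : Seminorm ℝ E2) (Q : ℝ) (hQ : 1 ≤ Q)
    (hqc : ∀ v w : E2, ‖v‖ = 1 → ‖w‖ = 1 → σ v ≤ Q * σ w) :
    ENNReal.ofReal ((⨆ v : Metric.sphere (0 : E2) 1, σ v) ^ 2) ≤
        ENNReal.ofReal (Q ^ 2) * busemannJ σ ∧
      busemannJ σ ≤ ENNReal.ofReal ((⨆ v : Metric.sphere (0 : E2) 1, σ v) ^ 2) := by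
  classical
  set M : ℝ := ⨆ v : Metric.sphere (0 : E2) 1, σ v with hMdef
  set C : ℝ := σ (EuclideanSpace.single 0 1) + σ (EuclideanSpace.single 1 1) with hCdef
  have hbound : ∀ v : E2, σ v ≤ C * ‖v‖ := by
    intro v
    calc σ v = σ (v 0 • EuclideanSpace.single 0 1 + v 1 • EuclideanSpace.single 1 1) := by
          rw [← E2.decomp v]
    _ ≤ σ (v 0 • EuclideanSpace.single 0 1) + σ (v 1 • EuclideanSpace.single 1 1) :=
          map_add_le_add σ _ _
    _ = |v 0| * σ (EuclideanSpace.single 0 1) + |v 1| * σ (EuclideanSpace.single 1 1) := by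
          rw [map_smul_eq_mul, map_smul_eq_mul, Real.norm_eq_abs, Real.norm_eq_abs]
    _ ≤ ‖v‖ * σ (EuclideanSpace.single 0 1) + ‖v‖ * σ (EuclideanSpace.single 1 1) :=
          add_le_add
            (mul_le_mul_of_nonneg_right (E2.abs_coord_le_norm v 0) (apply_nonneg σ _))
            (mul_le_mul_of_nonneg_right (E2.abs_coord_le_norm v 1) (apply_nonneg σ _))
    _ = C * ‖v‖ := by rw [hCdef]; ring
  have hbdd : BddAbove (Set.range fun v : Metric.sphere (0 : E2) 1 => σ v) := by
    refine ⟨C, ?_⟩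
    rintro x ⟨v, rfl⟩
    have hv : ‖(v : E2)‖ = 1 := mem_sphere_zero_iff_norm.1 v.2
    calc σ (v : E2) ≤ C * ‖(v : E2)‖ := hbound v
    _ = C := by rw [hv, mul_one]
  have he : ‖(EuclideanSpace.single 0 1 : E2)‖ = 1 := by
    rw [EuclideanSpace.norm_single]; norm_num
  have hMle : ∀ v : E2, ‖v‖ = 1 → σ v ≤ M := fun v hv =>
    le_ciSup hbdd (⟨v, mem_sphere_zero_iff_norm.2 hv⟩ : Metric.sphere (0 : E2) 1)
  have hM0 : 0 ≤ M := le_trans (apply_nonneg σ _) (hMle _ he)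
  haveI : Nonempty (Metric.sphere (0 : E2) 1) :=
    ⟨⟨EuclideanSpace.single 0 1, mem_sphere_zero_iff_norm.2 he⟩⟩
  have hMQ : ∀ v : E2, ‖v‖ = 1 → M ≤ Q * σ v := by
    intro v hv
    exact ciSup_le fun w => hqc w v (mem_sphere_zero_iff_norm.1 w.2) hv
  have hQ0 : (0:ℝ) < Q := lt_of_lt_of_le one_pos hQ
  have hup : ∀ v : E2, σ v ≤ M * ‖v‖ := by
    intro v
    rcases eq_or_ne v 0 with rfl | hv
    · simp
    · have hnv : ‖v‖ ≠ 0 := norm_ne_zero_iff.2 hv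
      have hu : ‖(‖v‖⁻¹ • v)‖ = 1 := by
        rw [norm_smul, norm_inv, norm_norm, inv_mul_cancel₀ hnv]
      have h := hMle _ hu
      rw [map_smul_eq_mul, Real.norm_eq_abs, abs_inv, abs_norm] at h
      calc σ v = ‖v‖ * (‖v‖⁻¹ * σ v) := by field_simp
      _ ≤ ‖v‖ * M := mul_le_mul_of_nonneg_left h (norm_nonneg v)
      _ = M * ‖v‖ := mul_comm _ _
  have hlow : ∀ v : E2, M * ‖v‖ ≤ Q * σ v := by
    intro v
    rcases eq_or_ne v 0 with rfl | hv
    · simp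
    · have hnv : (0:ℝ) < ‖v‖ := norm_pos_iff.2 hv
      have hu : ‖(‖v‖⁻¹ • v)‖ = 1 := by
        rw [norm_smul, norm_inv, norm_norm, inv_mul_cancel₀ hnv.ne']
      have h := hMQ _ hu
      rw [map_smul_eq_mul, Real.norm_eq_abs, abs_inv, abs_norm] at h
      have := mul_le_mul_of_nonneg_left h hnv.le
      calc M * ‖v‖ = ‖v‖ * M := mul_comm _ _
      _ ≤ ‖v‖ * (Q * (‖v‖⁻¹ * σ v)) := this
      _ = Q * σ v := by field_simp
  rcases eq_or_lt_of_le hM0 with hM | hM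
  · -- M = 0 : σ ≡ 0, the unit ball is the whole plane
    have hσ0 : ∀ v : E2, σ v = 0 := fun v =>
      le_antisymm (by simpa [← hM] using hup v) (apply_nonneg σ v)
    have hset : {v : E2 | σ v ≤ 1} = Set.univ := by
      ext v; simp [hσ0 v, zero_le_one]
    have hvol : volume {v : E2 | σ v ≤ 1} = ⊤ := by
      rw [hset]; exact MeasureTheory.measure_univ_of_isAddLeftInvariant volume
    have hJ : busemannJ σ = 0 := by rw [busemannJ, hvol, ENNReal.div_top]
    constructor
    · rw [hJ, ← hM]; simp
    · rw [hJ]; exact zero_le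
  · -- M > 0
    have volball := E2.volume_closedBall
    have h1 : Metric.closedBall (0:E2) (1/M) ⊆ {v : E2 | σ v ≤ 1} := by
      intro v hv
      rw [Metric.mem_closedBall, dist_zero_right] at hv
      show σ v ≤ 1
      calc σ v ≤ M * ‖v‖ := hup v
      _ ≤ M * (1/M) := mul_le_mul_of_nonneg_left hv hM.le
      _ = 1 := by field_simp
    have h2 : {v : E2 | σ v ≤ 1} ⊆ Metric.closedBall (0:E2) (Q/M) := by
      intro v hv
      rw [Metric.mem_closedBall, dist_zero_right, le_div_iff₀ hM]
      have h3 : M * ‖v‖ ≤ Q * σ v := hlow v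
      have h4 : Q * σ v ≤ Q * 1 := mul_le_mul_of_nonneg_left hv hQ0.le
      nlinarith
    set V := volume {v : E2 | σ v ≤ 1} with hVdef
    have lower : ENNReal.ofReal (Real.pi * (1/M)^2) ≤ V := by
      rw [← volball _ (by positivity)]; exact measure_mono h1
    have upper : V ≤ ENNReal.ofReal (Real.pi * (Q/M)^2) := by
      rw [← volball _ (by positivity)]; exact measure_mono h2
    have hVne : V ≠ 0 :=
      (lt_of_lt_of_le (ENNReal.ofReal_pos.2 (by positivity)) lower).ne'
    have hVtop : V ≠ ⊤ := (lt_of_le_of_lt upper ENNReal.ofReal_lt_top).ne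
    constructor
    · rw [busemannJ, ← hVdef, ← mul_div_assoc,
        ← ENNReal.ofReal_mul (by positivity : (0:ℝ) ≤ Q^2),
        ENNReal.le_div_iff_mul_le (Or.inl hVne) (Or.inl hVtop)]
      calc ENNReal.ofReal (M^2) * V
          ≤ ENNReal.ofReal (M^2) * ENNReal.ofReal (Real.pi * (Q/M)^2) := by gcongr
      _ = ENNReal.ofReal (M^2 * (Real.pi * (Q/M)^2)) :=
            (ENNReal.ofReal_mul (by positivity)).symm
      _ = ENNReal.ofReal (Q^2 * Real.pi) := by
            congr 1; field_simp
    · rw [busemannJ, ← hVdef, ENNReal.div_le_iff hVne hVtop]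
      calc ENNReal.ofReal Real.pi
          = ENNReal.ofReal (M^2 * (Real.pi * (1/M)^2)) := by
            congr 1; field_simp
      _ = ENNReal.ofReal (M^2) * ENNReal.ofReal (Real.pi * (1/M)^2) :=
            ENNReal.ofReal_mul (by positivity)
      _ ≤ ENNReal.ofReal (M^2) * V := by gcongr
end
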